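/- Let x : ℝ → ℝ^n be differentiable and u, y : ℝ → ℝ^m with E·x'(t) = (J − R)Q·x(t) + B·u(t) and y(t) = B^T Q·x(t) for all t, where J is skew-symmetric, E^T Q = Q^T E, and Q^T R Q = Q^T R^T Q. Define H(t) = (1/2)·x(t)^T E^T Q x(t). Then H'(t) = −(Q x(t))^T R (Q x(t)) + y(t)^T u(t) for all t. -/

import Mathlib

open Matrix

theorem stmt_18 {n m : ℕ}
    (E J R Q : Matrix (Fin n) (Fin n) ℝ)
    (B : Matrix (Fin n) (Fin m) ℝ)
    (hJ : Jᵀ = -J)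
    (hE : Eᵀ * Q = Qᵀ * E)
    (hR : Qᵀ * R * Q = Qᵀ * Rᵀ * Q)
    (x x' : ℝ → Fin n → ℝ) (u y : ℝ → Fin m → ℝ)
    (hx : ∀ t, HasDerivAt x (x' t) t)
    (hdyn : ∀ t, E.mulVec (x' t) = ((J - R) * Q).mulVec (x t) + B.mulVec (u t))
    (hout : ∀ t, y t = (Bᵀ * Q).mulVec (x t)) :
    ∀ t, HasDerivAt (fun s => (1 / 2 : ℝ) * (x s ⬝ᵥ (Eᵀ * Q).mulVec (x s)))
      (-(Q.mulVec (x t) ⬝ᵥ R.mulVec (Q.mulVec (x t))) + y t ⬝ᵥ u t) t := by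
  intro t
  have hxi : ∀ i, HasDerivAt (fun s => x s i) (x' t i) t :=
    fun i => hasDerivAt_pi.mp (hx t) i
  set M := Eᵀ * Q with hM
  -- derivative of the double-sum form
  have key : HasDerivAt
      (fun s => (1 / 2 : ℝ) * ∑ i, ∑ j, x s i * (M i j * x s j))
      ((1 / 2 : ℝ) * ∑ i, ∑ j,
        (x' t i * (M i j * x t j) + x t i * (M i j * x' t j))) t := by
    refine HasDerivAt.const_mul _ ?_
    refine HasDerivAt.fun_sum fun i _ => HasDerivAt.fun_sum fun j _ => ?_
    exact (hxi i).mul ((hxi j).const_mul _)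
  have hfun : (fun s => (1 / 2 : ℝ) * (x s ⬝ᵥ M.mulVec (x s)))
      = fun s => (1 / 2 : ℝ) * ∑ i, ∑ j, x s i * (M i j * x s j) := by
    funext s
    simp [dotProduct, mulVec, Finset.mul_sum]
  have hsum : ((1 / 2 : ℝ) * ∑ i, ∑ j,
        (x' t i * (M i j * x t j) + x t i * (M i j * x' t j)))
      = (1 / 2 : ℝ) * (x' t ⬝ᵥ M.mulVec (x t) + x t ⬝ᵥ M.mulVec (x' t)) := by
    simp [dotProduct, mulVec, Finset.mul_sum, Finset.sum_add_distrib]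
  -- algebraic identities
  have h1 : x' t ⬝ᵥ M.mulVec (x t) = E.mulVec (x' t) ⬝ᵥ Q.mulVec (x t) := by
    rw [hM, ← mulVec_mulVec, dotProduct_mulVec, vecMul_transpose]
  have h2 : x t ⬝ᵥ M.mulVec (x' t) = E.mulVec (x' t) ⬝ᵥ Q.mulVec (x t) := by
    rw [hE, ← mulVec_mulVec, dotProduct_mulVec, vecMul_transpose,
      dotProduct_comm]
  have hval : ((1 / 2 : ℝ) * ∑ i, ∑ j,
        (x' t i * (M i j * x t j) + x t i * (M i j * x' t j)))
      = -(Q.mulVec (x t) ⬝ᵥ R.mulVec (Q.mulVec (x t))) + y t ⬝ᵥ u t := by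
    rw [hsum, h1, h2, hdyn t]
    set z := Q.mulVec (x t) with hz
    have hJz : J.mulVec z ⬝ᵥ z = 0 := by
      have : z ⬝ᵥ J.mulVec z = -(J.mulVec z ⬝ᵥ z) := by
        rw [dotProduct_mulVec, ← Matrix.mulVec_transpose, hJ]
        simp [Matrix.neg_mulVec]
      have h' := dotProduct_comm z (J.mulVec z)
      linarith [this, h']
    have hBu : B.mulVec (u t) ⬝ᵥ z = y t ⬝ᵥ u t := by
      rw [hout t, ← mulVec_mulVec, dotProduct_comm, dotProduct_mulVec,
        Matrix.mulVec_transpose, hz]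
    have hRz : R.mulVec z ⬝ᵥ z = z ⬝ᵥ R.mulVec z := dotProduct_comm _ _
    rw [← mulVec_mulVec, sub_mulVec, add_dotProduct, sub_dotProduct, hJz, hBu,
      hRz]
    ring
  rw [hfun, ← hval]
  exact key
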